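/- Fix 1 ≤ m ≤ n−1. The map φ_m sending an antichain α of size m in [n]×[m] to the sequence λ = (λ_1,…,λ_{n−m}), where λ_i = |{j : (d_i, j) ∈ D(α)}| and d_i is the i-th smallest row index not occurring in α, is a bijection from the set of antichains of size m in [n]×[m] (with componentwise order) to the set of integer partitions with at most n−m parts and largest part at most m. -/
import Mathlib


open Matrix

namespace SchubertCell

/-- The strict down-set of a subset of a poset. -/
def Down {X : Type*} [Preorder X] (Y : Set X) : Set X := {x | ∃ y ∈ Y, x < y}

variable {F : Type*} [Field F] {n : ℕ}

/-- The pivot-set of a matrix: the maximal elements of the support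
under the componentwise (product) order on indices. -/
def Piv (M : Matrix (Fin n) (Fin n) F) : Set (Fin n × Fin n) :=
  {p | M p.1 p.2 ≠ 0 ∧ ∀ q : Fin n × Fin n, p < q → M q.1 q.2 = 0}

/-- Upper triangular matrix. -/
def UpperTri (G : Matrix (Fin n) (Fin n) F) : Prop := ∀ i j : Fin n, j < i → G i j = 0

/-- `M i j` is the last (largest row index) nonzero entry of column `j`. -/
def IsLast (M : Matrix (Fin n) (Fin n) F) (i j : Fin n) : Prop :=
  M i j ≠ 0 ∧ ∀ i' : Fin n, i < i' → M i' j = 0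

/-- Reduced reverse column echelon form: (CE1), (CE2), (CE3). -/
def IsRRCEF (M : Matrix (Fin n) (Fin n) F) : Prop :=
  (∀ j j' : Fin n, j ≤ j' → (∃ i, M i j' ≠ 0) → ∃ i, M i j ≠ 0) ∧
  (∀ i j i' j' : Fin n, IsLast M i j → IsLast M i' j' → j < j' → i' < i) ∧
  (∀ i j : Fin n, IsLast M i j → M i j = 1 ∧ ∀ j' : Fin n, j' ≠ j → M i j' = 0)

/-- `D(α)`: elements of the strict down-set of `α` whose row contains no element of `α`. -/
def DSet (α : Set (Fin n × Fin n)) : Set (Fin n × Fin n) :=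
  {p | p ∈ Down α ∧ ∀ k : Fin n, (p.1, k) ∉ α}

open Finset

private lemma card_filter_val_lt {n : ℕ} (t : ℕ) (ht : t ≤ n) :
    (Finset.univ.filter fun j : Fin n => (j : ℕ) < t).card = t := by
  have himg : (Finset.univ.filter fun j : Fin n => (j : ℕ) < t).image Fin.val
      = Finset.range t := by
    ext k
    simp only [Finset.mem_image, Finset.mem_filter, Finset.mem_univ, true_and,
      Finset.mem_range]
    constructor
    · rintro ⟨j, hj, rfl⟩; exact hj
    · intro hk; exact ⟨⟨k, lt_of_lt_of_le hk ht⟩, hk, rfl⟩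
  calc (Finset.univ.filter fun j : Fin n => (j : ℕ) < t).card
      = ((Finset.univ.filter fun j : Fin n => (j : ℕ) < t).image Fin.val).card :=
        (Finset.card_image_of_injective _ Fin.val_injective).symm
    _ = t := by rw [himg, Finset.card_range]

private lemma card_univ_filter_lt {n : ℕ} (a : Fin n) :
    (Finset.univ.filter fun x => x < a).card = (a : ℕ) := by
  have h : (Finset.univ.filter fun x : Fin n => x < a)
      = Finset.univ.filter fun x : Fin n => (x : ℕ) < (a : ℕ) := by
    apply Finset.filter_congr; intro x _; exact Fin.lt_def
  rw [h, card_filter_val_lt _ a.isLt.le]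

private lemma card_univ_filter_gt {n : ℕ} (a : Fin n) :
    (Finset.univ.filter fun x => a < x).card = n - 1 - (a : ℕ) := by
  have h1 := Finset.card_filter_add_card_filter_not
    (s := (Finset.univ : Finset (Fin n))) (p := fun x => a < x)
  have h2 : (Finset.univ.filter fun x : Fin n => ¬ a < x)
      = Finset.univ.filter fun x : Fin n => (x : ℕ) < (a : ℕ) + 1 := by
    apply Finset.filter_congr; intro x _
    rw [not_lt, Nat.lt_succ_iff, Fin.le_def]
  rw [h2, card_filter_val_lt _ a.isLt] at h1
  have h3 : (Finset.univ : Finset (Fin n)).card = n := by simp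
  omega

/-- Column value: number of elements of `R` strictly above `a`. -/
def colv {n : ℕ} (R : Finset (Fin n)) (a : Fin n) : ℕ := (R.filter fun x => a < x).card

/-- The canonical antichain with row set `R`. -/
def aset {n : ℕ} (R : Finset (Fin n)) : Set (Fin n × Fin n) :=
  {p | p.1 ∈ R ∧ (p.2 : ℕ) = colv R p.1}

lemma colv_le {n : ℕ} (R : Finset (Fin n)) (a : Fin n) : colv R a ≤ R.card :=
  Finset.card_le_card (Finset.filter_subset _ _)

lemma colv_lt_of_mem {n : ℕ} {R : Finset (Fin n)} {r : Fin n} (hr : r ∈ R) :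
    colv R r < R.card := by
  refine Finset.card_lt_card ?_
  rw [Finset.ssubset_iff_of_subset (Finset.filter_subset _ _)]
  exact ⟨r, hr, by simp⟩

lemma colv_strict_anti {n : ℕ} {R : Finset (Fin n)} {a b : Fin n} (hab : a < b)
    (hb : b ∈ R) : colv R b < colv R a := by
  refine Finset.card_lt_card ?_
  rw [Finset.ssubset_iff_of_subset]
  · exact ⟨b, by simp [Finset.mem_filter, hb, hab], by simp⟩
  · exact fun x hx => by
      simp only [Finset.mem_filter] at hx ⊢
      exact ⟨hx.1, hab.trans hx.2⟩

lemma colv_anti {n : ℕ} (R : Finset (Fin n)) {a b : Fin n} (hab : a ≤ b) :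
    colv R b ≤ colv R a := by
  refine Finset.card_le_card fun x hx => ?_
  simp only [Finset.mem_filter] at hx ⊢
  exact ⟨hx.1, lt_of_le_of_lt hab hx.2⟩

lemma aset_eq_image {n : ℕ} {R : Finset (Fin n)} (hRn : R.card < n) :
    aset R = (fun r => (r, (⟨colv R r, lt_of_le_of_lt (colv_le R r) hRn⟩ : Fin n))) '' ↑R := by
  ext p
  constructor
  · rintro ⟨h1, h2⟩
    exact ⟨p.1, h1, Prod.ext rfl (Fin.ext h2.symm)⟩
  · rintro ⟨r, hr, rfl⟩
    exact ⟨hr, rfl⟩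

lemma aset_ncard {n : ℕ} {R : Finset (Fin n)} (hRn : R.card < n) :
    (aset R).ncard = R.card := by
  rw [aset_eq_image hRn,
    Set.ncard_image_of_injective _ (fun a b h => congrArg Prod.fst h),
    Set.ncard_coe_finset]

lemma aset_antichain {n : ℕ} (R : Finset (Fin n)) : IsAntichain (· ≤ ·) (aset R) := by
  intro p hp q hq hne hle
  obtain ⟨hp1, hp2⟩ := hp
  obtain ⟨hq1, hq2⟩ := hq
  have h12 : p.1 ≤ q.1 ∧ p.2 ≤ q.2 := Prod.le_def.1 hle
  rcases eq_or_lt_of_le h12.1 with h | h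
  · refine hne (Prod.ext h ?_)
    apply Fin.ext
    rw [hp2, hq2, h]
  · have := colv_strict_anti h hq1
    have h2 : (p.2 : ℕ) ≤ (q.2 : ℕ) := h12.2
    omega

lemma aset_snd_lt {n : ℕ} (R : Finset (Fin n)) : ∀ p ∈ aset R, (p.2 : ℕ) < R.card :=
  fun p hp => hp.2 ▸ colv_lt_of_mem hp.1

lemma aset_fst_image {n : ℕ} {R : Finset (Fin n)} (hRn : R.card < n) :
    Prod.fst '' aset R = ↑R := by
  rw [aset_eq_image hRn, ← Set.image_comp]
  exact Set.image_id _ |>.symm ▸ by ext x; simp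

lemma forall_notMem_aset_iff {n : ℕ} {R : Finset (Fin n)} (hRn : R.card < n)
    (i : Fin n) : (∀ k, (i, k) ∉ aset R) ↔ i ∉ R := by
  constructor
  · intro h hi
    exact h ⟨colv R i, lt_of_le_of_lt (colv_le R i) hRn⟩ ⟨hi, rfl⟩
  · exact fun hi k hk => hi hk.1

lemma dset_row_count {n : ℕ} {R : Finset (Fin n)} (hRn : R.card < n) {a : Fin n}
    (ha : a ∉ R) :
    {j : Fin n | (a, j) ∈ DSet (aset R)}.ncard = colv R a := by
  have hset : {j : Fin n | (a, j) ∈ DSet (aset R)} = {j : Fin n | (j : ℕ) < colv R a} := by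
    ext j
    simp only [Set.mem_setOf_eq, DSet, Down]
    constructor
    · rintro ⟨⟨p, hp, hlt⟩, -⟩
      have hane : a ≠ p.1 := fun h => ha (h ▸ hp.1)
      have halt : a < p.1 ∧ j ≤ p.2 := by
        rcases Prod.lt_iff.1 hlt with ⟨h1, h2⟩ | ⟨h1, h2⟩
        · exact ⟨h1, h2⟩
        · exact ⟨lt_of_le_of_ne h1 hane, le_of_lt h2⟩
      have h1 : (j : ℕ) ≤ colv R p.1 := hp.2 ▸ halt.2
      exact lt_of_le_of_lt h1 (colv_strict_anti halt.1 hp.1)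
    · intro hj
      have hne : (R.filter fun x => a < x).Nonempty := by
        rw [← Finset.card_pos]
        exact lt_of_le_of_lt (Nat.zero_le _) hj
      set r0 := (R.filter fun x => a < x).min' hne with hr0def
      have hr0 : r0 ∈ R.filter fun x => a < x := Finset.min'_mem _ _
      rw [Finset.mem_filter] at hr0
      have herase : R.filter (fun x => r0 < x) = (R.filter fun x => a < x).erase r0 := by
        ext x
        simp only [Finset.mem_filter, Finset.mem_erase]
        constructor
        · intro ⟨hx1, hx2⟩
          exact ⟨ne_of_gt hx2, hx1, hr0.2.trans hx2⟩
        · intro ⟨hx1, hx2, hx3⟩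
          exact ⟨hx2, lt_of_le_of_ne (Finset.min'_le _ _ (Finset.mem_filter.2 ⟨hx2, hx3⟩))
            (Ne.symm hx1)⟩
      have hcol0 : colv R r0 = colv R a - 1 := by
        rw [colv, herase, Finset.card_erase_of_mem (Finset.mem_filter.2 hr0)]; rfl
      have hjle : (j : ℕ) ≤ colv R r0 := by omega
      refine ⟨⟨(r0, ⟨colv R r0, lt_of_le_of_lt (colv_le R r0) hRn⟩), ⟨hr0.1, rfl⟩, ?_⟩,
        fun k hk => ha hk.1⟩
      exact Prod.lt_iff.2 (Or.inl ⟨hr0.2, hjle⟩)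
  rw [hset]
  have : {j : Fin n | (j : ℕ) < colv R a}
      = ↑(Finset.univ.filter fun j : Fin n => (j : ℕ) < colv R a) := by ext; simp
  rw [this, Set.ncard_coe_finset,
    card_filter_val_lt _ (le_of_lt (lt_of_le_of_lt (colv_le R a) hRn))]

/-- The set of row indices of `α`, as a `Finset`. -/
noncomputable def rowsOf {n : ℕ} (α : Set (Fin n × Fin n)) : Finset (Fin n) :=
  (Set.toFinite α).toFinset.image Prod.fst

lemma antichain_eq_aset {n m : ℕ} (hmn : m < n) {α : Set (Fin n × Fin n)}
    (h1 : IsAntichain (· ≤ ·) α) (h2 : ∀ p ∈ α, (p.2 : ℕ) < m) (h3 : α.ncard = m) :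
    (rowsOf α).card = m ∧ α = aset (rowsOf α) := by
  classical
  have hfin : α.Finite := Set.toFinite α
  set A := hfin.toFinset with hAdef
  have hmem : ∀ p, p ∈ A ↔ p ∈ α := fun p => hfin.mem_toFinset
  have hAcard : A.card = m := by
    rw [← h3, Set.ncard_eq_toFinset_card α hfin]
  -- injectivity of coordinates
  have hfst : ∀ p ∈ α, ∀ q ∈ α, p.1 = q.1 → p = q := by
    intro p hp q hq h
    by_contra hne
    rcases lt_trichotomy p.2 q.2 with h' | h' | h'
    · exact h1 hp hq hne (Prod.le_def.2 ⟨le_of_eq h, le_of_lt h'⟩)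
    · exact hne (Prod.ext h h')
    · exact h1 hq hp (Ne.symm hne) (Prod.le_def.2 ⟨le_of_eq h.symm, le_of_lt h'⟩)
  have hsnd : ∀ p ∈ α, ∀ q ∈ α, p.2 = q.2 → p = q := by
    intro p hp q hq h
    by_contra hne
    rcases lt_trichotomy p.1 q.1 with h' | h' | h'
    · exact h1 hp hq hne (Prod.le_def.2 ⟨le_of_lt h', le_of_eq h⟩)
    · exact hne (Prod.ext h' h)
    · exact h1 hq hp (Ne.symm hne) (Prod.le_def.2 ⟨le_of_lt h', le_of_eq h.symm⟩)
  have hfstInj : Set.InjOn (Prod.fst : Fin n × Fin n → Fin n) ↑A := by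
    intro p hp q hq h
    rw [Finset.mem_coe, hmem] at hp hq
    exact hfst p hp q hq h
  have hR : rowsOf α = A.image Prod.fst := rfl
  have hRcard : (rowsOf α).card = m := by
    rw [hR, Finset.card_image_of_injOn hfstInj, hAcard]
  -- columns are exactly {0, ..., m-1}
  have hsndInj : Set.InjOn (Prod.snd : Fin n × Fin n → Fin n) ↑A := by
    intro p hp q hq h
    rw [Finset.mem_coe, hmem] at hp hq
    exact hsnd p hp q hq h
  have hC : A.image Prod.snd = Finset.univ.filter fun c : Fin n => (c : ℕ) < m := by
    apply Finset.eq_of_subset_of_card_le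
    · intro c hc
      rw [Finset.mem_image] at hc
      obtain ⟨p, hp, rfl⟩ := hc
      simp only [Finset.mem_filter, Finset.mem_univ, true_and]
      exact h2 p ((hmem p).1 hp)
    · rw [card_filter_val_lt m hmn.le, Finset.card_image_of_injOn hsndInj, hAcard]
  -- the key counting identity
  have hkey : ∀ p ∈ α, p.1 ∈ rowsOf α ∧ (p.2 : ℕ) = colv (rowsOf α) p.1 := by
    intro p hp
    refine ⟨Finset.mem_image.2 ⟨p, (hmem p).2 hp, rfl⟩, ?_⟩
    -- rows above p.1 ↔ columns below p.2
    have hAB : (A.filter fun q => p.1 < q.1) = A.filter fun q => q.2 < p.2 := by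
      apply Finset.filter_congr
      intro q hq
      rw [hmem] at hq
      constructor
      · intro hlt
        by_contra hge
        rw [not_lt] at hge
        exact h1 hp hq (fun h => absurd (congrArg Prod.fst h) (ne_of_lt hlt))
          (Prod.le_def.2 ⟨le_of_lt hlt, hge⟩)
      · intro hlt
        by_contra hge
        rw [not_lt] at hge
        exact h1 hq hp (fun h => absurd (congrArg Prod.snd h) (ne_of_lt hlt))
          (Prod.le_def.2 ⟨hge, le_of_lt hlt⟩)
    have hL : colv (rowsOf α) p.1 = (A.filter fun q => p.1 < q.1).card := by
      have himg : (rowsOf α).filter (fun x => p.1 < x)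
          = (A.filter fun q => p.1 < q.1).image Prod.fst := by
        ext x
        simp only [Finset.mem_filter, Finset.mem_image, hR]
        constructor
        · rintro ⟨⟨q, hq, rfl⟩, hx⟩
          exact ⟨q, ⟨hq, hx⟩, rfl⟩
        · rintro ⟨q, ⟨hq, hx⟩, rfl⟩
          exact ⟨⟨q, hq, rfl⟩, hx⟩
      rw [colv, himg,
        Finset.card_image_of_injOn (hfstInj.mono (fun x hx =>
          Finset.mem_coe.2 ((Finset.filter_subset _ _) (Finset.mem_coe.1 hx))))]
    have hRt : ((A.filter fun q => q.2 < p.2).card : ℕ) = (p.2 : ℕ) := by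
      have himg : (A.filter fun q => q.2 < p.2).image Prod.snd
          = Finset.univ.filter fun c : Fin n => c < p.2 := by
        ext c
        simp only [Finset.mem_image, Finset.mem_filter, Finset.mem_univ, true_and]
        constructor
        · rintro ⟨q, ⟨hq, hc⟩, rfl⟩
          exact hc
        · intro hc
          have hcm : c ∈ A.image Prod.snd := by
            rw [hC]
            simp only [Finset.mem_filter, Finset.mem_univ, true_and]
            exact lt_of_lt_of_le (Fin.lt_def.1 hc) (Nat.le_of_lt_succ
              (Nat.lt_succ_of_lt (h2 p hp)))
          rw [Finset.mem_image] at hcm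
          obtain ⟨q, hq, rfl⟩ := hcm
          exact ⟨q, ⟨hq, hc⟩, rfl⟩
      have hmono : ↑(A.filter fun q => q.2 < p.2) ⊆ (↑A : Set (Fin n × Fin n)) :=
        fun x hx => Finset.mem_coe.2 ((Finset.filter_subset _ _) (Finset.mem_coe.1 hx))
      have := Finset.card_image_of_injOn (hsndInj.mono hmono)
      rw [himg] at this
      rw [← this, card_univ_filter_lt]
    rw [hL, hAB, hRt]
  -- conclude
  refine ⟨hRcard, ?_⟩
  have hsub : α ⊆ aset (rowsOf α) := fun p hp => ⟨(hkey p hp).1, (hkey p hp).2⟩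
  have hRn : (rowsOf α).card < n := hRcard ▸ hmn
  refine Set.eq_of_subset_of_ncard_le hsub ?_ (Set.toFinite _)
  rw [aset_ncard hRn, hRcard, h3]

private lemma filter_compl_partition {n : ℕ} (R : Finset (Fin n)) (p : Fin n → Prop)
    [DecidablePred p] :
    (R.filter p).card + (Rᶜ.filter p).card = (Finset.univ.filter p).card := by
  classical
  have h := Finset.card_filter_add_card_filter_not
    (s := Finset.univ.filter p) (p := fun x => x ∈ R)
  have h1 : (Finset.univ.filter p).filter (fun x => x ∈ R) = R.filter p := by
    ext x
    simp only [Finset.mem_filter, Finset.mem_univ, true_and]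
    exact and_comm
  have h2 : (Finset.univ.filter p).filter (fun x => ¬ x ∈ R) = Rᶜ.filter p := by
    ext x
    simp only [Finset.mem_filter, Finset.mem_univ, true_and, Finset.mem_compl]
    exact and_comm
  rw [h1, h2] at h
  exact h

lemma rows_spec {n m : ℕ} (hmn : m < n)
    (α : {α : Set (Fin n × Fin n) // IsAntichain (· ≤ ·) α ∧
      (∀ p ∈ α, (p.2 : ℕ) < m) ∧ α.ncard = m}) :
    (rowsOf α.1).card = m ∧ α.1 = aset (rowsOf α.1) :=
  antichain_eq_aset hmn α.2.1 α.2.2.1 α.2.2.2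

lemma rows_compl_card {n m : ℕ} (hmn : m < n)
    (α : {α : Set (Fin n × Fin n) // IsAntichain (· ≤ ·) α ∧
      (∀ p ∈ α, (p.2 : ℕ) < m) ∧ α.ncard = m}) :
    ((rowsOf α.1)ᶜ).card = n - m := by
  rw [Finset.card_compl, (rows_spec hmn α).1]
  simp

/-- The forward map: antichains to partitions. -/
noncomputable def phiFun (n m : ℕ) (hmn : m < n)
    (α : {α : Set (Fin n × Fin n) // IsAntichain (· ≤ ·) α ∧
      (∀ p ∈ α, (p.2 : ℕ) < m) ∧ α.ncard = m}) :
    {l : Fin (n - m) → ℕ // Antitone l ∧ ∀ i, l i ≤ m} :=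
  ⟨fun i => colv (rowsOf α.1) (((rowsOf α.1)ᶜ).orderEmbOfFin (rows_compl_card hmn α) i),
    fun i i' h => colv_anti _ ((((rowsOf α.1)ᶜ).orderEmbOfFin
      (rows_compl_card hmn α)).monotone h),
    fun i => le_trans (colv_le _ _) (rows_spec hmn α).1.le⟩

/-- The enumeration of the complement row set determined by a partition. -/
def gfun (n m : ℕ) (hmn : m < n) (l : Fin (n - m) → ℕ) (i : Fin (n - m)) : Fin n :=
  ⟨i.val + (m - l i), by have := i.isLt; omega⟩

lemma gfun_strictMono {n m : ℕ} (hmn : m < n) {l : Fin (n - m) → ℕ}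
    (hl : Antitone l) : StrictMono (gfun n m hmn l) := by
  intro i i' h
  have h1 : (i : ℕ) < (i' : ℕ) := h
  have h2 : l i' ≤ l i := hl h.le
  simp only [gfun, Fin.mk_lt_mk]
  omega

lemma gfun_image_compl_card {n m : ℕ} (hmn : m < n) {l : Fin (n - m) → ℕ}
    (hl : Antitone l) :
    ((Finset.univ.image (gfun n m hmn l))ᶜ).card = m := by
  rw [Finset.card_compl,
    Finset.card_image_of_injective _ (gfun_strictMono hmn hl).injective]
  simp only [Finset.card_univ, Fintype.card_fin]
  omega

/-- The inverse map: partitions to antichains. -/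
noncomputable def psiFun (n m : ℕ) (hmn : m < n)
    (l : {l : Fin (n - m) → ℕ // Antitone l ∧ ∀ i, l i ≤ m}) :
    {α : Set (Fin n × Fin n) // IsAntichain (· ≤ ·) α ∧
      (∀ p ∈ α, (p.2 : ℕ) < m) ∧ α.ncard = m} :=
  ⟨aset ((Finset.univ.image (gfun n m hmn l.1))ᶜ),
    aset_antichain _,
    fun p hp => lt_of_lt_of_le (aset_snd_lt _ p hp)
      (le_of_eq (gfun_image_compl_card hmn l.2.1)),
    by
      have hc := gfun_image_compl_card hmn l.2.1
      rw [aset_ncard (by rw [hc]; exact hmn), hc]⟩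

lemma rowsOf_aset {n : ℕ} {R : Finset (Fin n)} (hRn : R.card < n) :
    rowsOf (aset R) = R := by
  apply Finset.coe_injective
  rw [rowsOf, Finset.coe_image, Set.Finite.coe_toFinset]
  exact aset_fst_image hRn

lemma phi_psi {n m : ℕ} (hmn : m < n)
    (l : {l : Fin (n - m) → ℕ // Antitone l ∧ ∀ i, l i ≤ m}) :
    phiFun n m hmn (psiFun n m hmn l) = l := by
  classical
  set g := gfun n m hmn l.1 with hgdef
  have hg : StrictMono g := gfun_strictMono hmn l.2.1
  set R := (Finset.univ.image g)ᶜ with hRdef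
  have hRcard : R.card = m := gfun_image_compl_card hmn l.2.1
  have hRn : R.card < n := by rw [hRcard]; exact hmn
  have hrows : rowsOf (aset R) = R := rowsOf_aset hRn
  have hRc : Rᶜ = Finset.univ.image g := by rw [hRdef, compl_compl]
  -- identify the order embedding with g
  have hcc : ((rowsOf (aset R))ᶜ).card = n - m :=
    rows_compl_card hmn (psiFun n m hmn l)
  have hmemg : ∀ x, g x ∈ (rowsOf (aset R))ᶜ := by
    intro x
    rw [hrows, hRc]
    exact Finset.mem_image_of_mem g (Finset.mem_univ x)
  have hd_eq : g = ⇑(((rowsOf (aset R))ᶜ).orderEmbOfFin hcc) :=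
    Finset.orderEmbOfFin_unique hcc hmemg hg
  apply Subtype.ext
  funext i
  show colv (rowsOf (aset R)) (((rowsOf (aset R))ᶜ).orderEmbOfFin hcc i) = l.1 i
  rw [← hd_eq, hrows]
  -- now compute colv R (g i) = l i
  have hpart := filter_compl_partition R (fun x => g i < x)
  have himg : Rᶜ.filter (fun x => g i < x)
      = (Finset.univ.filter fun i' => i < i').image g := by
    rw [hRc]
    ext x
    simp only [Finset.mem_filter, Finset.mem_image, Finset.mem_univ, true_and]
    constructor
    · rintro ⟨⟨i', rfl⟩, hlt⟩
      exact ⟨i', hg.lt_iff_lt.1 hlt, rfl⟩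
    · rintro ⟨i', hlt, rfl⟩
      exact ⟨⟨i', rfl⟩, hg hlt⟩
  have hB : (Rᶜ.filter (fun x => g i < x)).card = (n - m) - 1 - (i : ℕ) := by
    rw [himg, Finset.card_image_of_injective _ hg.injective, card_univ_filter_gt]
  have hA : (Finset.univ.filter fun x => g i < x).card = n - 1 - ((g i : Fin n) : ℕ) :=
    card_univ_filter_gt _
  have hgi : ((g i : Fin n) : ℕ) = (i : ℕ) + (m - l.1 i) := rfl
  have hli : l.1 i ≤ m := l.2.2 i
  have hisLt : (i : ℕ) < n - m := i.isLt
  have hcol : colv R (g i) = (R.filter fun x => g i < x).card := rfl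
  omega

lemma psi_phi {n m : ℕ} (hmn : m < n)
    (α : {α : Set (Fin n × Fin n) // IsAntichain (· ≤ ·) α ∧
      (∀ p ∈ α, (p.2 : ℕ) < m) ∧ α.ncard = m}) :
    psiFun n m hmn (phiFun n m hmn α) = α := by
  classical
  obtain ⟨hRcard, hαa⟩ := rows_spec hmn α
  set R := rowsOf α.1 with hRdef
  have hRn : R.card < n := by rw [hRcard]; exact hmn
  set d := (Rᶜ.orderEmbOfFin (rows_compl_card hmn α)) with hddef
  have hdmem : ∀ i, d i ∈ Rᶜ := fun i => Finset.orderEmbOfFin_mem _ _ _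
  have hdnR : ∀ i, d i ∉ R := fun i => Finset.mem_compl.1 (hdmem i)
  set l := (phiFun n m hmn α).1 with hldef
  have hlval : ∀ i, l i = colv R (d i) := fun i => rfl
  -- gfun of l equals d
  have hgd : gfun n m hmn l = ⇑d := by
    funext i
    apply Fin.ext
    have fA : colv R (d i) + (R.filter fun x => x < d i).card = m := by
      have h := Finset.card_filter_add_card_filter_not
        (s := R) (p := fun x => d i < x)
      have heq : R.filter (fun x => ¬ d i < x) = R.filter fun x => x < d i := by
        apply Finset.filter_congr
        intro x hx
        rw [not_lt]
        constructor
        · intro hle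
          exact lt_of_le_of_ne hle (fun h => (hdnR i) (h ▸ hx))
        · exact le_of_lt
      rw [heq, hRcard] at h
      exact h
    have fB := filter_compl_partition R (fun x => x < d i)
    have fC : (Finset.univ.filter fun x => x < d i).card = ((d i : Fin n) : ℕ) :=
      card_univ_filter_lt _
    have fD : (Rᶜ.filter fun x => x < d i).card = (i : ℕ) := by
      have himg : Rᶜ.filter (fun x => x < d i)
          = (Finset.univ.filter fun i' => i' < i).image ⇑d := by
        ext x
        simp only [Finset.mem_filter, Finset.mem_image, Finset.mem_univ, true_and]
        constructor
        · rintro ⟨hx, hlt⟩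
          have : x ∈ Set.range ⇑d := by
            rw [Finset.range_orderEmbOfFin]
            exact hx
          obtain ⟨i', rfl⟩ := this
          exact ⟨i', d.strictMono.lt_iff_lt.1 hlt, rfl⟩
        · rintro ⟨i', hlt, rfl⟩
          exact ⟨hdmem i', d.strictMono hlt⟩
      rw [himg, Finset.card_image_of_injective _ d.injective, card_univ_filter_lt]
    have hli : l i ≤ m := (phiFun n m hmn α).2.2 i
    show (i : ℕ) + (m - l i) = ((d i : Fin n) : ℕ)
    rw [hlval i] at hli ⊢
    omega
  -- hence the image of gfun is Rᶜ
  have himg2 : Finset.univ.image (gfun n m hmn l) = Rᶜ := by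
    apply Finset.coe_injective
    rw [Finset.coe_image, Finset.coe_univ, Set.image_univ, hgd,
      Finset.range_orderEmbOfFin]
  apply Subtype.ext
  show aset ((Finset.univ.image (gfun n m hmn l))ᶜ) = α.1
  rw [himg2, compl_compl, ← hαa]

theorem antichains_biject_partitions (n m : ℕ) (hm1 : 1 ≤ m) (hm2 : m ≤ n - 1) :
    ∃ φ : {α : Set (Fin n × Fin n) // IsAntichain (· ≤ ·) α ∧
            (∀ p ∈ α, (p.2 : ℕ) < m) ∧ α.ncard = m} →
          {l : Fin (n - m) → ℕ // Antitone l ∧ ∀ i, l i ≤ m},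
      Function.Bijective φ ∧
      ∀ (α : {α : Set (Fin n × Fin n) // IsAntichain (· ≤ ·) α ∧
            (∀ p ∈ α, (p.2 : ℕ) < m) ∧ α.ncard = m})
        (d : Fin (n - m) → Fin n), StrictMono d →
        (∀ i : Fin n, (∀ k : Fin n, (i, k) ∉ α.val) ↔ i ∈ Set.range d) →
        ∀ i : Fin (n - m),
          (φ α).val i = Set.ncard {j : Fin n | (d i, j) ∈ DSet α.val} := by
  have hmn : m < n := by omega
  refine ⟨phiFun n m hmn, ?_, ?_⟩
  · exact Function.bijective_iff_has_inverse.2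
      ⟨psiFun n m hmn, psi_phi hmn, phi_psi hmn⟩
  · intro α d hd hdr i
    obtain ⟨hRcard, hαa⟩ := rows_spec hmn α
    have hRn : (rowsOf α.1).card < n := by rw [hRcard]; exact hmn
    have hmemd : ∀ x, d x ∈ (rowsOf α.1)ᶜ := by
      intro x
      rw [Finset.mem_compl, ← forall_notMem_aset_iff hRn, ← hαa]
      exact (hdr (d x)).2 ⟨x, rfl⟩
    have hd_eq : d = ⇑(((rowsOf α.1)ᶜ).orderEmbOfFin (rows_compl_card hmn α)) :=
      Finset.orderEmbOfFin_unique _ hmemd hd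
    have hDnR : d i ∉ rowsOf α.1 := Finset.mem_compl.1 (hmemd i)
    show colv (rowsOf α.1) (((rowsOf α.1)ᶜ).orderEmbOfFin (rows_compl_card hmn α) i)
      = {j : Fin n | (d i, j) ∈ DSet α.val}.ncard
    rw [← hd_eq]
    conv_rhs => rw [hαa]
    exact (dset_row_count hRn hDnR).symm
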